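/- For k ∈ (0,1), with 𝓛_+ = -∂_ξ² - (1+k²) + 6k² sn², the following pointwise identities hold: 𝓛_+(sn) = 4k² sn³; 𝓛_+(cn·dn·∫₀^ξ sn²/dn² dy) = -2 sn (1 - 2 sn²); and 𝓛_+(ξ·cn·dn) = 2 sn (1 + k² - 2k² sn²). -/

import Mathlib

/-- The operator `𝓛₊ = -∂_ξ² - (1+k²) + 6k² sn²`. -/
noncomputable def Lp15 (k : ℝ) (sn g : ℝ → ℝ) : ℝ → ℝ :=
  fun ξ => -(deriv (deriv g) ξ) + (-(1+k^2) + 6*k^2*(sn ξ)^2) * g ξ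

private lemma congr_d15 {f : ℝ → ℝ} {a b x : ℝ} (h : HasDerivAt f a x) (e : a = b) :
    HasDerivAt f b x := e ▸ h

theorem stmt15 (k : ℝ) (hk : k ∈ Set.Ioo (0:ℝ) 1)
    (sn cn dn : ℝ → ℝ)
    (hsn : ∀ ξ : ℝ, HasDerivAt sn (cn ξ * dn ξ) ξ)
    (hcn : ∀ ξ : ℝ, HasDerivAt cn (-(sn ξ * dn ξ)) ξ)
    (hdn : ∀ ξ : ℝ, HasDerivAt dn (-(k^2 * sn ξ * cn ξ)) ξ)
    (hsn0 : sn 0 = 0) (hcn0 : cn 0 = 1) (hdn0 : dn 0 = 1)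
    (hdn2 : ∀ ξ : ℝ, (dn ξ)^2 = 1 - k^2*(sn ξ)^2)
    (hcn2 : ∀ ξ : ℝ, (cn ξ)^2 = 1 - (sn ξ)^2) :
    (∀ ξ : ℝ, Lp15 k sn sn ξ = 4*k^2*(sn ξ)^3) ∧
    (∀ ξ : ℝ, Lp15 k sn (fun t => cn t * dn t * ∫ y in (0:ℝ)..t, (sn y)^2/(dn y)^2) ξ
        = -2 * sn ξ * (1 - 2*(sn ξ)^2)) ∧
    (∀ ξ : ℝ, Lp15 k sn (fun t => t * cn t * dn t) ξ
        = 2 * sn ξ * (1 + k^2 - 2*k^2*(sn ξ)^2)) := by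
  obtain ⟨hk0, hk1⟩ := hk
  have hdnne : ∀ ξ : ℝ, dn ξ ≠ 0 := by
    intro ξ h
    have h1 : (sn ξ)^2 ≤ 1 := by nlinarith [hcn2 ξ, sq_nonneg (cn ξ)]
    have h2 : (dn ξ)^2 = 0 := by rw [h]; ring
    rw [hdn2 ξ] at h2
    nlinarith
  have dsn : Differentiable ℝ sn := fun ξ => (hsn ξ).differentiableAt
  have ddn : Differentiable ℝ dn := fun ξ => (hdn ξ).differentiableAt
  have csn : Continuous sn := dsn.continuous
  have cdn : Continuous dn := ddn.continuous
  -- derivative of A = cn*dn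
  have hA : ∀ ξ : ℝ, HasDerivAt (fun t => cn t * dn t)
      (-sn ξ * dn ξ^2 - k^2 * (sn ξ * cn ξ^2)) ξ := by
    intro ξ
    exact congr_d15 ((hcn ξ).mul (hdn ξ)) (by ring)
  -- derivative of A'
  have hA' : ∀ ξ : ℝ, HasDerivAt (fun t => -sn t * dn t^2 - k^2 * (sn t * cn t^2))
      (-cn ξ * dn ξ^3 - k^2*cn ξ^3*dn ξ + 4*k^2*sn ξ^2*cn ξ*dn ξ) ξ := by
    intro ξ
    have h := ((hsn ξ).neg.mul ((hdn ξ).pow 2)).sub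
      (((hsn ξ).mul ((hcn ξ).pow 2)).const_mul (k^2))
    exact congr_d15 h (by simp only [Pi.pow_apply, Pi.neg_apply, Pi.mul_apply, Pi.div_apply, id]; ring)
  -- Part 1
  have part1 : ∀ ξ : ℝ, Lp15 k sn sn ξ = 4*k^2*(sn ξ)^3 := by
    intro ξ
    have hd1 : deriv sn = fun t => cn t * dn t := funext fun t => (hsn t).deriv
    simp only [Lp15, hd1, (hA ξ).deriv]
    linear_combination (sn ξ) * hdn2 ξ + k^2 * (sn ξ) * hcn2 ξ
  -- Part 3
  have part3 : ∀ ξ : ℝ, Lp15 k sn (fun t => t * cn t * dn t) ξ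
      = 2 * sn ξ * (1 + k^2 - 2*k^2*(sn ξ)^2) := by
    intro ξ
    have hB : ∀ ξ : ℝ, HasDerivAt (fun t => t * cn t * dn t)
        (cn ξ * dn ξ + ξ * (-sn ξ * dn ξ^2 - k^2 * (sn ξ * cn ξ^2))) ξ := by
      intro ξ
      have h := ((hasDerivAt_id' (x := ξ)).mul (hcn ξ)).mul (hdn ξ)
      exact congr_d15 h (by simp only [Pi.pow_apply, Pi.neg_apply, Pi.mul_apply, Pi.div_apply, id]; ring)
    have hd1 : deriv (fun t => t * cn t * dn t)
        = fun t => cn t * dn t + t * (-sn t * dn t^2 - k^2 * (sn t * cn t^2)) :=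
      funext fun t => (hB t).deriv
    have hB' : HasDerivAt (fun t => cn t * dn t + t * (-sn t * dn t^2 - k^2 * (sn t * cn t^2)))
        (2*(-sn ξ * dn ξ^2 - k^2 * (sn ξ * cn ξ^2))
          + ξ * (-cn ξ * dn ξ^3 - k^2*cn ξ^3*dn ξ + 4*k^2*sn ξ^2*cn ξ*dn ξ)) ξ := by
      have h := (hA ξ).add ((hasDerivAt_id' (x := ξ)).mul (hA' ξ))
      exact congr_d15 h (by ring)
    simp only [Lp15, hd1, hB'.deriv]
    linear_combination (2*sn ξ + ξ*cn ξ*dn ξ) * hdn2 ξ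
      + (2*k^2*sn ξ + k^2*ξ*cn ξ*dn ξ) * hcn2 ξ
  -- Part 2
  have part2 : ∀ ξ : ℝ, Lp15 k sn (fun t => cn t * dn t * ∫ y in (0:ℝ)..t, (sn y)^2/(dn y)^2) ξ
      = -2 * sn ξ * (1 - 2*(sn ξ)^2) := by
    have cf : Continuous (fun y => (sn y)^2/(dn y)^2) :=
      (csn.pow 2).div (cdn.pow 2) (fun y => pow_ne_zero 2 (hdnne y))
    have hI : ∀ ξ : ℝ, HasDerivAt (fun t => ∫ y in (0:ℝ)..t, (sn y)^2/(dn y)^2)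
        ((sn ξ)^2/(dn ξ)^2) ξ := fun ξ => (cf.integral_hasStrictDerivAt 0 ξ).hasDerivAt
    intro ξ
    have hg : ∀ ξ : ℝ, HasDerivAt (fun t => cn t * dn t * ∫ y in (0:ℝ)..t, (sn y)^2/(dn y)^2)
        ((-sn ξ * dn ξ^2 - k^2 * (sn ξ * cn ξ^2)) * (∫ y in (0:ℝ)..ξ, (sn y)^2/(dn y)^2)
          + cn ξ * dn ξ * ((sn ξ)^2/(dn ξ)^2)) ξ := fun ξ => (hA ξ).mul (hI ξ)
    have hd1 : deriv (fun t => cn t * dn t * ∫ y in (0:ℝ)..t, (sn y)^2/(dn y)^2)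
        = fun t => (-sn t * dn t^2 - k^2 * (sn t * cn t^2)) * (∫ y in (0:ℝ)..t, (sn y)^2/(dn y)^2)
          + cn t * dn t * ((sn t)^2/(dn t)^2) := funext fun t => (hg t).deriv
    -- derivative of sn²/dn²
    have hq : HasDerivAt (fun t => (sn t)^2/(dn t)^2) (2*sn ξ*cn ξ/dn ξ^3) ξ := by
      have h := ((hsn ξ).pow 2).div ((hdn ξ).pow 2) (pow_ne_zero 2 (hdnne ξ))
      refine congr_d15 h ?_
      have e1 := hdn2 ξ
      simp only [Pi.pow_apply, Pi.neg_apply, Pi.mul_apply, Pi.div_apply, id]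
      field_simp [hdnne ξ]
      linear_combination (2*sn ξ*cn ξ*dn ξ) * e1
    have hgg : HasDerivAt (fun t => (-sn t * dn t^2 - k^2 * (sn t * cn t^2)) * (∫ y in (0:ℝ)..t, (sn y)^2/(dn y)^2)
          + cn t * dn t * ((sn t)^2/(dn t)^2))
        ((-cn ξ * dn ξ^3 - k^2*cn ξ^3*dn ξ + 4*k^2*sn ξ^2*cn ξ*dn ξ) * (∫ y in (0:ℝ)..ξ, (sn y)^2/(dn y)^2)
          - 2*(sn ξ)^3 + 2*sn ξ*(cn ξ)^2) ξ := by
      have h := ((hA' ξ).mul (hI ξ)).add ((hA ξ).mul hq)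
      refine congr_d15 h ?_
      have e1 := hdn2 ξ
      field_simp [hdnne ξ]
      linear_combination (-2*sn ξ*cn ξ^2) * e1
    simp only [Lp15, hd1, hgg.deriv]
    linear_combination (cn ξ*dn ξ*(∫ y in (0:ℝ)..ξ, (sn y)^2/(dn y)^2)) * hdn2 ξ
      + (k^2*cn ξ*dn ξ*(∫ y in (0:ℝ)..ξ, (sn y)^2/(dn y)^2) - 2*sn ξ) * hcn2 ξ
  exact ⟨part1, part2, part3⟩
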